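/- For every p ≥ 1, every prime number q, and every integer m ≥ 0, B(p, q^m) = ((q^p − 1)(q^{p+1} − 1)⋯(q^{p+m−1} − 1)) / ((q − 1)(q^2 − 1)⋯(q^m − 1)), i.e. B(p,q^m) equals the Gaussian binomial coefficient [m+p−1 choose m]_q. -/

import Mathlib

/-- `B p n = Σ_{s₁ | s₂ | ⋯ | s_{p-1} | n} s₁⋯s_{p-1}`, the sum over `(p-1)`-tuples of
positive integers forming a divisibility chain ending at `n`, of their product. -/
def B (p n : ℕ) : ℕ :=
  ∑ s ∈ Finset.filter
      (fun s : Fin (p - 1) → ℕ =>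
        ∀ i : Fin (p - 1),
          s i ∣ if h : i.val + 1 < p - 1 then s ⟨i.val + 1, h⟩ else n)
      (Fintype.piFinset fun _ => n.divisors),
    ∏ i, s i

open Finset

lemma B_eq (k m : ℕ) : B (k + 1) m =
    ∑ s ∈ Finset.filter
      (fun s : Fin k → ℕ =>
        ∀ i : Fin k, s i ∣ if h : i.val + 1 < k then s ⟨i.val + 1, h⟩ else m)
      (Fintype.piFinset fun _ => m.divisors),
    ∏ i, s i := rfl

lemma B_one (n : ℕ) : B 1 n = 1 := by
  rw [B_eq]
  rw [Finset.filter_true_of_mem (fun s _ => fun i => i.elim0)]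
  simp

lemma chain_dvd {k : ℕ} (s : Fin k → ℕ)
    (h : ∀ i : Fin k, ∀ hi : i.val + 1 < k, s i ∣ s ⟨i.val + 1, hi⟩) :
    ∀ a b : ℕ, ∀ ha : a < k, ∀ hb : b < k, a ≤ b → s ⟨a, ha⟩ ∣ s ⟨b, hb⟩ := by
  intro a b
  induction b with
  | zero =>
    intro ha hb hab
    obtain rfl : a = 0 := Nat.le_zero.mp hab
    exact dvd_rfl
  | succ b ih =>
    intro ha hb hab
    rcases Nat.eq_or_lt_of_le hab with rfl | hlt
    · exact dvd_rfl
    · have hb' : b < k := Nat.lt_of_succ_lt hb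
      exact (ih ha hb' (Nat.lt_succ_iff.mp hlt)).trans (h ⟨b, hb'⟩ hb)

lemma B_succ (r n : ℕ) (hn : n ≠ 0) :
    B (r + 2) n = ∑ d ∈ n.divisors, d * B (r + 1) d := by
  rw [B_eq (r + 1) n]
  have hstep : ∀ d ∈ n.divisors, d * B (r + 1) d =
      ∑ t ∈ Finset.filter
        (fun t : Fin r → ℕ =>
          ∀ i : Fin r, t i ∣ if h : i.val + 1 < r then t ⟨i.val + 1, h⟩ else d)
        (Fintype.piFinset fun _ => d.divisors),
      d * ∏ i, t i := by
    intro d _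
    rw [B_eq, Finset.mul_sum]
  rw [Finset.sum_congr rfl hstep, Finset.sum_sigma']
  refine Finset.sum_nbij'
    (fun s => ⟨s (Fin.last r), fun j => s j.castSucc⟩)
    (fun x => Fin.snoc x.2 x.1) ?_ ?_ ?_ ?_ ?_
  · -- forward membership
    intro s hs
    rw [Finset.mem_filter, Fintype.mem_piFinset] at hs
    obtain ⟨hmem, hcond⟩ := hs
    have hchain : ∀ i : Fin (r + 1), ∀ hi : i.val + 1 < r + 1, s i ∣ s ⟨i.val + 1, hi⟩ := by
      intro i hi
      have := hcond i
      rw [dif_pos hi] at this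
      exact this
    have hdvd_last : ∀ i : Fin (r + 1), s i ∣ s (Fin.last r) := by
      intro i
      exact chain_dvd s hchain i.val r i.isLt (Nat.lt_succ_self r) (Nat.lt_succ_iff.mp i.isLt)
    have hlast_n : s (Fin.last r) ∣ n := by
      have := hcond (Fin.last r)
      rw [dif_neg (by simp [Fin.last])] at this
      exact this
    have hlast_ne : s (Fin.last r) ≠ 0 := by
      intro h0
      have := Nat.mem_divisors.mp (hmem (Fin.last r))
      rw [h0] at this
      exact hn (Nat.eq_zero_of_zero_dvd this.1)
    rw [Finset.mem_sigma]
    constructor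
    · exact Nat.mem_divisors.mpr ⟨hlast_n, hn⟩
    · rw [Finset.mem_filter, Fintype.mem_piFinset]
      constructor
      · intro j
        exact Nat.mem_divisors.mpr ⟨hdvd_last j.castSucc, hlast_ne⟩
      · intro i
        by_cases hi : i.val + 1 < r
        · rw [dif_pos hi]
          have h2 : (i.castSucc : Fin (r + 1)).val + 1 < r + 1 :=
            Nat.lt_succ_of_lt (by simpa using hi)
          have := hchain i.castSucc h2
          convert this using 2
          ext; simp
        · rw [dif_neg hi]
          have hir : i.val + 1 = r := by omega
          have h2 : (i.castSucc : Fin (r + 1)).val + 1 < r + 1 := by simp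
          have := hchain i.castSucc h2
          have heq : (⟨(i.castSucc : Fin (r + 1)).val + 1, h2⟩ : Fin (r + 1)) = Fin.last r := by
            ext; simp [hir]
          rw [heq] at this
          exact this
  · -- backward membership
    intro x hx
    rw [Finset.mem_sigma] at hx
    obtain ⟨hd, ht⟩ := hx
    rw [Finset.mem_filter, Fintype.mem_piFinset] at ht
    obtain ⟨htmem, htcond⟩ := ht
    obtain ⟨hdn, hn0⟩ := Nat.mem_divisors.mp hd
    rw [Finset.mem_filter, Fintype.mem_piFinset]
    constructor
    · intro i
      refine Fin.lastCases ?_ ?_ i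
      · simpa using hd
      · intro j
        rw [Fin.snoc_castSucc]
        exact Nat.mem_divisors.mpr ⟨(Nat.mem_divisors.mp (htmem j)).1.trans hdn, hn⟩
    · intro i
      refine Fin.lastCases ?_ ?_ i
      · rw [dif_neg (by simp [Fin.last])]
        simpa using hdn
      · intro j
        have hj1 : (j.castSucc : Fin (r + 1)).val + 1 < r + 1 := by
          simpa using Nat.succ_lt_succ j.isLt
        rw [dif_pos hj1, Fin.snoc_castSucc]
        have := htcond j
        by_cases hj : j.val + 1 < r
        · rw [dif_pos hj] at this
          have heq : (⟨(j.castSucc : Fin (r + 1)).val + 1, hj1⟩ : Fin (r + 1)) =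
              Fin.castSucc ⟨j.val + 1, hj⟩ := by ext; simp
          rw [heq, Fin.snoc_castSucc]
          exact this
        · rw [dif_neg hj] at this
          have hjr : j.val + 1 = r := by omega
          have heq : (⟨(j.castSucc : Fin (r + 1)).val + 1, hj1⟩ : Fin (r + 1)) = Fin.last r := by
            ext; simp [hjr]
          rw [heq, Fin.snoc_last]
          exact this
  · -- left inverse
    intro s _
    simp only
    exact Fin.snoc_init_self s
  · -- right inverse
    intro x _
    refine Sigma.ext ?_ ?_
    · simp [Fin.snoc_last]
    · simp [Fin.snoc_castSucc]
  · -- values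
    intro s _
    simp only
    rw [Fin.prod_univ_castSucc]
    ring

lemma qpow_ne_one {q : ℚ} (hq : 2 ≤ q) (k : ℕ) (hk : k ≠ 0) : q ^ k - 1 ≠ 0 := by
  have h1 : (1 : ℚ) < q := by linarith
  have := one_lt_pow₀ h1 hk
  intro h
  have : q ^ k = 1 := by linarith [sub_eq_zero.mp h]
  linarith [one_lt_pow₀ h1 hk]

lemma den_ne {q : ℚ} (hq : 2 ≤ q) (m : ℕ) :
    (∏ i ∈ Finset.range m, (q ^ (i + 1) - 1)) ≠ 0 := by
  apply Finset.prod_ne_zero_iff.mpr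
  intro i _
  exact qpow_ne_one hq (i + 1) (Nat.succ_ne_zero i)

lemma gauss_step {q : ℚ} (hq : 2 ≤ q) (p m : ℕ) :
    ∑ j ∈ Finset.range (m + 1), q ^ j *
      ((∏ i ∈ Finset.range j, (q ^ (p + i) - 1)) /
        (∏ i ∈ Finset.range j, (q ^ (i + 1) - 1)))
    = (∏ i ∈ Finset.range m, (q ^ (p + 1 + i) - 1)) /
        (∏ i ∈ Finset.range m, (q ^ (i + 1) - 1)) := by
  induction m with
  | zero => simp
  | succ m ih =>
    rw [Finset.sum_range_succ, ih]
    have hnum : (∏ i ∈ Finset.range (m + 1), (q ^ (p + i) - 1)) =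
        (∏ i ∈ Finset.range m, (q ^ (p + 1 + i) - 1)) * (q ^ p - 1) := by
      rw [Finset.prod_range_succ']
      have h2 : ∀ i ∈ Finset.range m, (q ^ (p + (i + 1)) - 1) = (q ^ (p + 1 + i) - 1) := by
        intro i _
        congr 2
        omega
      rw [Finset.prod_congr rfl h2]
      norm_num
    rw [hnum, Finset.prod_range_succ, Finset.prod_range_succ]
    have hD := den_ne hq m
    have h1 := qpow_ne_one hq (m + 1) (Nat.succ_ne_zero m)
    field_simp
    ring

theorem stmt2 (p : ℕ) (hp : 1 ≤ p) (q : ℕ) (hq : q.Prime) (m : ℕ) :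
    (B p (q ^ m) : ℚ) =
      (∏ i ∈ Finset.range m, ((q : ℚ) ^ (p + i) - 1)) /
        (∏ i ∈ Finset.range m, ((q : ℚ) ^ (i + 1) - 1)) := by
  have hq2 : (2 : ℚ) ≤ (q : ℚ) := by exact_mod_cast hq.two_le
  obtain ⟨k, rfl⟩ : ∃ k, p = k + 1 := ⟨p - 1, (Nat.succ_pred_eq_of_pos hp).symm⟩
  clear hp
  induction k generalizing m with
  | zero =>
    rw [B_one]
    push_cast
    rw [eq_div_iff (den_ne hq2 m), one_mul]
    apply Finset.prod_congr rfl
    intro i _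
    congr 2
    omega
  | succ k ih =>
    have hrec := B_succ k (q ^ m) (pow_ne_zero m hq.ne_zero)
    rw [show k + 1 + 1 = k + 2 from rfl, hrec]
    rw [Nat.sum_divisors_prime_pow hq]
    push_cast
    have : ∀ j ∈ Finset.range (m + 1),
        ((q : ℚ) ^ j) * (B (k + 1) (q ^ j) : ℚ) =
        (q : ℚ) ^ j * ((∏ i ∈ Finset.range j, ((q : ℚ) ^ (k + 1 + i) - 1)) /
          (∏ i ∈ Finset.range j, ((q : ℚ) ^ (i + 1) - 1))) := by
      intro j _
      rw [ih j]
    rw [Finset.sum_congr rfl this, gauss_step hq2 (k + 1) m]
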